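/- The positive decision (A ⟨B⟩⁺ C) satisfies the truth conditions: (i) if (A⟨B⟩⁺C) is true then A is true or B is true; (ii) if (A⟨B⟩⁺C) is true then A is true or C is true; (iii) if A is true then (A⟨B⟩⁺C) is true; (iv) if both B and C are true then (A⟨B⟩⁺C) is true. Equivalently, (A⟨B⟩⁺C) is semantically equivalent to A ∨ (B ∧ C). -/

import Mathlib

/-- eNDT formulas. -/
inductive ENDT where
  | zero : ENDT
  | one : ENDT
  | dec : ENDT → ℕ → ENDT → ENDT
  | orf : ENDT → ENDT → ENDT
  | ext : ℕ → ENDT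

/-- Strict upper bound on extension variable indices occurring in a formula. -/
def ENDT.extBound : ENDT → ℕ
  | .zero => 0
  | .one => 0
  | .dec A _ B => max A.extBound B.extBound
  | .orf A B => max A.extBound B.extBound
  | .ext i => i + 1

def ENDT.fsize : ENDT → ℕ
  | .zero => 1
  | .one => 1
  | .dec A _ B => A.fsize + B.fsize + 1
  | .orf A B => A.fsize + B.fsize + 1
  | .ext _ => 1

/-- Satisfaction `α ⊨_E A` of eNDT formulas over extension axioms `E`, by `E`-induction. -/
inductive Sat (E : ℕ → ENDT) (α : ℕ → Bool) : ENDT → Prop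
  | one : Sat E α .one
  | decF {A B : ENDT} {p : ℕ} : α p = false → Sat E α A → Sat E α (.dec A p B)
  | decT {A B : ENDT} {p : ℕ} : α p = true → Sat E α B → Sat E α (.dec A p B)
  | orl {A B : ENDT} : Sat E α A → Sat E α (.orf A B)
  | orr {A B : ENDT} : Sat E α B → Sat E α (.orf A B)
  | ext {i : ℕ} : Sat E α (E i) → Sat E α (.ext i)

/-- The positive decision `(A ⟨B⟩⁺ C)`, unfolded according to its defining extension axioms:
`(A⟨0⟩⁺C) = A`, `(A⟨1⟩⁺C) = A ∨ C`, `(A⟨B₀∨B₁⟩⁺C) = (A⟨B₀⟩⁺C) ∨ (A⟨B₁⟩⁺C)`,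
`(A⟨B₀ p B₁⟩⁺C) = (A⟨B₀⟩⁺C) p (A⟨B₁⟩⁺C)`, `(A⟨e_i⟩⁺C) = (A⟨E_i⟩⁺C)`.
The fuel argument makes the recursion through extension axioms well-founded; for
well-founded `E` and `fuel ≥ B.extBound` it never runs out. -/
def pdAux (E : ℕ → ENDT) (A C : ENDT) : ℕ → ENDT → ENDT
  | _, .zero => A
  | _, .one => .orf A C
  | fuel, .orf B0 B1 => .orf (pdAux E A C fuel B0) (pdAux E A C fuel B1)
  | fuel, .dec B0 p B1 => .dec (pdAux E A C fuel B0) p (pdAux E A C fuel B1)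
  | fuel, .ext i => if _h : i < fuel then pdAux E A C i (E i) else .zero
termination_by fuel B => (fuel, B.fsize)
decreasing_by
  · exact Prod.Lex.right _ (by simp [ENDT.fsize] <;> omega)
  · exact Prod.Lex.right _ (by simp [ENDT.fsize] <;> omega)
  · exact Prod.Lex.right _ (by simp [ENDT.fsize] <;> omega)
  · exact Prod.Lex.right _ (by simp [ENDT.fsize] <;> omega)
  · exact Prod.Lex.left _ _ _h

/-- The positive decision `(A ⟨B⟩⁺ C)`. -/
def pd (E : ℕ → ENDT) (A B C : ENDT) : ENDT := pdAux E A C B.extBound B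

/-- Truth conditions for positive decisions: (i) if `(A⟨B⟩⁺C)` is true then `A` or `B` is;
(ii) if `(A⟨B⟩⁺C)` is true then `A` or `C` is; (iii) if `A` is true then so is `(A⟨B⟩⁺C)`;
(iv) if `B` and `C` are true then so is `(A⟨B⟩⁺C)`. Equivalently, `(A⟨B⟩⁺C)` is
semantically equivalent to `A ∨ (B ∧ C)`. -/

lemma sat_zero_iff (E : ℕ → ENDT) (α : ℕ → Bool) : Sat E α .zero ↔ False := by
  constructor
  · intro h; cases h
  · intro h; exact h.elim

lemma sat_orf_iff (E : ℕ → ENDT) (α : ℕ → Bool) (P Q : ENDT) :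
    Sat E α (.orf P Q) ↔ Sat E α P ∨ Sat E α Q := by
  constructor
  · intro h; cases h with
    | orl h => exact Or.inl h
    | orr h => exact Or.inr h
  · rintro (h | h)
    · exact Sat.orl h
    · exact Sat.orr h

lemma sat_dec_iff (E : ℕ → ENDT) (α : ℕ → Bool) (P Q : ENDT) (p : ℕ) :
    Sat E α (.dec P p Q) ↔ (α p = false ∧ Sat E α P) ∨ (α p = true ∧ Sat E α Q) := by
  constructor
  · intro h; cases h with
    | decF h1 h2 => exact Or.inl ⟨h1, h2⟩
    | decT h1 h2 => exact Or.inr ⟨h1, h2⟩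
  · rintro (⟨h1, h2⟩ | ⟨h1, h2⟩)
    · exact Sat.decF h1 h2
    · exact Sat.decT h1 h2

lemma sat_ext_iff (E : ℕ → ENDT) (α : ℕ → Bool) (i : ℕ) :
    Sat E α (.ext i) ↔ Sat E α (E i) := by
  constructor
  · intro h; cases h with | ext h => exact h
  · exact Sat.ext

lemma pdAux_iff (E : ℕ → ENDT) (hE : ∀ i, (E i).extBound ≤ i)
    (A C : ENDT) (α : ℕ → Bool) :
    ∀ fuel B, B.extBound ≤ fuel →
      (Sat E α (pdAux E A C fuel B) ↔ Sat E α A ∨ (Sat E α B ∧ Sat E α C)) := by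
  intro fuel
  induction fuel using Nat.strong_induction_on with
  | _ fuel ih =>
    intro B
    induction B with
    | zero =>
      intro _
      simp [pdAux, sat_zero_iff]
    | one =>
      intro _
      simp [pdAux, sat_orf_iff]
      constructor
      · rintro (h | h)
        · exact Or.inl h
        · exact Or.inr ⟨Sat.one, h⟩
      · rintro (h | ⟨_, h⟩)
        · exact Or.inl h
        · exact Or.inr h
    | orf B0 B1 ih0 ih1 =>
      intro hb
      simp only [ENDT.extBound, max_le_iff] at hb
      rw [pdAux, sat_orf_iff, ih0 hb.1, ih1 hb.2, sat_orf_iff]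
      tauto
    | dec B0 p B1 ih0 ih1 =>
      intro hb
      simp only [ENDT.extBound, max_le_iff] at hb
      rw [pdAux, sat_dec_iff, ih0 hb.1, ih1 hb.2, sat_dec_iff]
      cases h : α p <;> simp [h] <;> tauto
    | ext i =>
      intro hb
      simp only [ENDT.extBound] at hb
      rw [pdAux, sat_ext_iff]
      rw [dif_pos (by omega : i < fuel)]
      exact ih i (by omega) (E i) (hE i)

theorem posdec_truth_conditions (E : ℕ → ENDT) (hE : ∀ i, (E i).extBound ≤ i)
    (A B C : ENDT) (α : ℕ → Bool) :
    (Sat E α (pd E A B C) → Sat E α A ∨ Sat E α B) ∧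
    (Sat E α (pd E A B C) → Sat E α A ∨ Sat E α C) ∧
    (Sat E α A → Sat E α (pd E A B C)) ∧
    (Sat E α B ∧ Sat E α C → Sat E α (pd E A B C)) ∧
    (Sat E α (pd E A B C) ↔ Sat E α A ∨ (Sat E α B ∧ Sat E α C)) := by
  have key := pdAux_iff E hE A C α B.extBound B le_rfl
  rw [pd]
  refine ⟨?_, ?_, ?_, ?_, key⟩ <;> rw [key] <;> tauto
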